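/- Let P^e denote the set of all probability measures on a finite set Ω with full support. Then for every random variable D and every finite σ-algebra F_t generated by a partition {P^t_1,...,P^t_{n_t}} of Ω: inf_{Q ∈ P^e} E_Q[D | F_t] = Σ_i 1_{P^t_i} · min_{ω ∈ P^t_i} D(ω). Consequently, P^e is a consistent set of probability measures: inf_{Q∈P^e} E_Q[D|F_t] = inf_{Q∈P^e} E_Q[ inf_{M∈P^e} E_M[D|F_{t+1}] | F_t ] for all t. -/

import Mathlib

open MeasureTheory
open scoped BigOperators ENNReal

/-- A probability mass function on the finite set `Ω`. -/
def IsProb {Ω : Type*} [Fintype Ω] (Q : Ω → ℝ) : Prop :=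
  (∀ ω, 0 ≤ Q ω) ∧ ∑ ω, Q ω = 1

/-- Full support (equivalence with a full-support reference measure). -/
def FullSupport {Ω : Type*} (Q : Ω → ℝ) : Prop := ∀ ω, 0 < Q ω

/-- The atom of the σ-algebra `𝒢` containing `ω`. -/
def atomOf {Ω : Type*} (𝒢 : MeasurableSpace Ω) (ω : Ω) : Set Ω :=
  ⋂₀ {A : Set Ω | MeasurableSet[𝒢] A ∧ ω ∈ A}

/-- Conditional expectation of `X` under `Q` given the σ-algebra `𝒢`, computed
pointwise on atoms (finite state space). -/
noncomputable def condExpOn {Ω : Type*} [Fintype Ω] (Q : Ω → ℝ)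
    (𝒢 : MeasurableSpace Ω) (X : Ω → ℝ) (ω : Ω) : ℝ :=
  (∑ ω', (atomOf 𝒢 ω).indicator (fun u => Q u * X u) ω') /
    (∑ ω', (atomOf 𝒢 ω).indicator Q ω')

/-- `inf_{Q ∈ 𝒬} E_Q[X | 𝒢]`, pointwise in `ω`. -/
noncomputable def infCE {Ω : Type*} [Fintype Ω] (𝒬 : Set (Ω → ℝ))
    (𝒢 : MeasurableSpace Ω) (X : Ω → ℝ) (ω : Ω) : ℝ :=
  sInf ((fun Q => condExpOn Q 𝒢 X ω) '' 𝒬)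

/-- A set of probability measures is consistent w.r.t. the filtration `F`. -/
def IsConsistent {Ω : Type*} [Fintype Ω] (T : ℕ) (F : ℕ → MeasurableSpace Ω)
    (𝒬 : Set (Ω → ℝ)) : Prop :=
  ∀ t, t < T → ∀ X : Ω → ℝ, ∀ ω : Ω,
    infCE 𝒬 (F t) X ω = infCE 𝒬 (F t) (infCE 𝒬 (F (t + 1)) X) ω

/-- A sequence of sets of probability measures is dynamically consistent
w.r.t. the filtration `F`. -/
def DynConsistent {Ω : Type*} [Fintype Ω] (T : ℕ) (F : ℕ → MeasurableSpace Ω)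
    (𝒬 : ℕ → Set (Ω → ℝ)) : Prop :=
  ∀ t, t < T → ∀ A : Set Ω, MeasurableSet[F t] A → A.Nonempty →
    ∀ X : Ω → ℝ, ∀ ω ∈ A,
      (⨅ ω' : A, infCE (𝒬 (t + 1)) (F (t + 1)) X (ω' : Ω)) ≤ infCE (𝒬 t) (F t) X ω ∧
      infCE (𝒬 t) (F t) X ω ≤ ⨆ ω' : A, infCE (𝒬 (t + 1)) (F (t + 1)) X (ω' : Ω)

/-- The set `P^e` of all full-support probability measures on `Ω`. -/
def fullSupportProbs (Ω : Type*) [Fintype Ω] : Set (Ω → ℝ) :=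
  {Q | IsProb Q ∧ FullSupport Q}

-- auxiliary lemmas
lemma mem_atomOf {Ω : Type*} (𝒢 : MeasurableSpace Ω) (ω : Ω) : ω ∈ atomOf 𝒢 ω :=
  Set.mem_sInter.2 fun _ hA => hA.2

lemma atomOf_subset_of_mem {Ω : Type*} (𝒢 : MeasurableSpace Ω) {ω ω' : Ω}
    (h : ω' ∈ atomOf 𝒢 ω) : atomOf 𝒢 ω' ⊆ atomOf 𝒢 ω := fun x hx =>
  Set.mem_sInter.2 fun A hA => Set.mem_sInter.1 hx A ⟨hA.1, Set.mem_sInter.1 h A hA⟩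

lemma atomOf_anti {Ω : Type*} {𝒢 𝒢' : MeasurableSpace Ω} (h : 𝒢 ≤ 𝒢') (ω : Ω) :
    atomOf 𝒢' ω ⊆ atomOf 𝒢 ω := fun x hx =>
  Set.mem_sInter.2 fun A hA => Set.mem_sInter.1 hx A ⟨h A hA.1, hA.2⟩

lemma infCE_key {Ω : Type*} [Fintype Ω] [Nonempty Ω] (𝒢 : MeasurableSpace Ω)
    (D : Ω → ℝ) (ω : Ω) :
    infCE (fullSupportProbs Ω) 𝒢 D ω = ⨅ ω' : atomOf 𝒢 ω, D (ω' : Ω) := by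
  classical
  set A := atomOf 𝒢 ω with hA
  have hωA : ω ∈ A := mem_atomOf 𝒢 ω
  haveI : Nonempty A := ⟨⟨ω, hωA⟩⟩
  obtain ⟨u₀, hu₀⟩ := Finite.exists_min (fun u : A => D (u : Ω))
  have hbdd : BddBelow (Set.range fun u : A => D (u : Ω)) := Finite.bddBelow_range _
  have hiInf : (⨅ u : A, D (u : Ω)) = D (u₀ : Ω) :=
    le_antisymm (ciInf_le hbdd u₀) (le_ciInf hu₀)
  set m := D (u₀ : Ω) with hm
  set t := A.toFinset with ht
  have hω₀t : (u₀ : Ω) ∈ t := Set.mem_toFinset.2 u₀.2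
  have hωt : ω ∈ t := Set.mem_toFinset.2 hωA
  have hsum : ∀ f : Ω → ℝ, (∑ ω', A.indicator f ω') = ∑ u ∈ t, f u := by
    intro f
    rw [← Finset.sum_subset (Finset.subset_univ t)
      (fun u _ hu => Set.indicator_of_notMem (fun h => hu (Set.mem_toFinset.2 h)) f)]
    exact Finset.sum_congr rfl fun u hu => Set.indicator_of_mem (Set.mem_toFinset.1 hu) f
  have hmem : ∀ u ∈ t, m ≤ D u := fun u hu => hu₀ ⟨u, Set.mem_toFinset.1 hu⟩
  -- lower bound for every full-support probability
  have hval : ∀ Q ∈ fullSupportProbs Ω, m ≤ condExpOn Q 𝒢 D ω := by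
    rintro Q ⟨hprob, hfull⟩
    have hden : 0 < ∑ u ∈ t, Q u :=
      Finset.sum_pos' (fun u _ => (hfull u).le) ⟨ω, hωt, hfull ω⟩
    rw [condExpOn, hsum, hsum, le_div_iff₀ hden, Finset.mul_sum]
    refine Finset.sum_le_sum fun u hu => ?_
    calc m * Q u = Q u * m := mul_comm _ _
    _ ≤ Q u * D u := mul_le_mul_of_nonneg_left (hmem u hu) (hprob.1 u)
  -- the uniform measure
  have hn : (0:ℝ) < (Fintype.card Ω : ℝ) := by
    exact_mod_cast Fintype.card_pos
  set n : ℝ := (Fintype.card Ω : ℝ) with hndef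
  have hunif : (fun _ : Ω => n⁻¹) ∈ fullSupportProbs Ω := by
    refine ⟨⟨fun _ => (inv_pos.2 hn).le, ?_⟩, fun _ => inv_pos.2 hn⟩
    rw [Finset.sum_const, Finset.card_univ, nsmul_eq_mul]
    exact mul_inv_cancel₀ hn.ne'
  have hSne : ((fun Q => condExpOn Q 𝒢 D ω) '' fullSupportProbs Ω).Nonempty :=
    ⟨_, Set.mem_image_of_mem _ hunif⟩
  have hSbdd : BddBelow ((fun Q => condExpOn Q 𝒢 D ω) '' fullSupportProbs Ω) := by
    refine ⟨m, ?_⟩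
    rintro x ⟨Q, hQ, rfl⟩
    exact hval Q hQ
  rw [hiInf, infCE]
  refine le_antisymm ?_ (le_csInf hSne (by rintro x ⟨Q, hQ, rfl⟩; exact hval Q hQ))
  -- upper bound: sInf ≤ m + ε for all ε > 0
  refine le_of_forall_pos_le_add fun ε hε => ?_
  set S₀ : ℝ := ∑ u ∈ t, (D u - m) with hS₀def
  have hS₀ : 0 ≤ S₀ := Finset.sum_nonneg fun u hu => sub_nonneg.2 (hmem u hu)
  set β : ℝ := min (1 / (2 * n)) (ε / (2 * (S₀ + 1))) with hβdef
  have hβpos : 0 < β := lt_min (by positivity) (by positivity)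
  have hβn : β * n ≤ 1 / 2 := by
    have := min_le_left (1 / (2 * n)) (ε / (2 * (S₀ + 1)))
    rw [hβdef]
    calc min (1/(2*n)) (ε/(2*(S₀+1))) * n ≤ (1/(2*n)) * n :=
      mul_le_mul_of_nonneg_right this hn.le
    _ = 1/2 := by field_simp
  have hβS : 2 * β * (S₀ + 1) ≤ ε := by
    have h1 : β ≤ ε / (2 * (S₀ + 1)) := min_le_right _ _
    have h2 : (0:ℝ) < 2 * (S₀ + 1) := by linarith
    calc 2 * β * (S₀ + 1) = β * (2 * (S₀ + 1)) := by ring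
    _ ≤ (ε / (2 * (S₀ + 1))) * (2 * (S₀ + 1)) := mul_le_mul_of_nonneg_right h1 h2.le
    _ = ε := by field_simp
  set Q : Ω → ℝ := fun u => (1 - β * n) * (if u = (u₀ : Ω) then 1 else 0) + β with hQdef
  have hQfull : FullSupport Q := by
    intro u
    have : (0:ℝ) ≤ (1 - β * n) * (if u = (u₀ : Ω) then 1 else 0) := by
      apply mul_nonneg (by linarith) (by positivity)
    simp only [hQdef]; linarith
  have hQprob : IsProb Q := by
    refine ⟨fun u => (hQfull u).le, ?_⟩
    simp only [hQdef]
    rw [Finset.sum_add_distrib, ← Finset.mul_sum, Fintype.sum_ite_eq' (u₀ : Ω) (fun _ => (1:ℝ)),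
      Finset.sum_const, Finset.card_univ, nsmul_eq_mul, ← hndef]
    ring
  have hQmem : Q ∈ fullSupportProbs Ω := ⟨hQprob, hQfull⟩
  -- compute the conditional expectation of Q
  obtain ⟨c, hcdef⟩ : ∃ c : ℝ, c = (t.card : ℝ) := ⟨_, rfl⟩
  have hc : 0 ≤ c := hcdef ▸ Nat.cast_nonneg _
  have hindsum : ∀ f : Ω → ℝ, ∑ u ∈ t, (if u = (u₀ : Ω) then 1 else 0) * f u = f (u₀ : Ω) := by
    intro f
    have : ∀ u ∈ t, (if u = (u₀ : Ω) then 1 else 0) * f u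
        = if u = (u₀ : Ω) then f u else 0 := by
      intro u _; split <;> simp
    rw [Finset.sum_congr rfl this, Finset.sum_ite_eq' t (u₀ : Ω) f, if_pos hω₀t]
  have hden : ∑ u ∈ t, Q u = (1 - β * n) + c * β := by
    simp only [hQdef]
    rw [Finset.sum_add_distrib, ← Finset.mul_sum]
    have := hindsum (fun _ => (1:ℝ))
    simp only [mul_one] at this
    rw [this, Finset.sum_const, nsmul_eq_mul, mul_one, ← hcdef]
  have hsumD : ∑ u ∈ t, D u = S₀ + c * m := by
    rw [hS₀def, Finset.sum_sub_distrib, Finset.sum_const, nsmul_eq_mul, ← hcdef]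
    ring
  have hnum : ∑ u ∈ t, Q u * D u = (1 - β * n) * m + β * (S₀ + c * m) := by
    simp only [hQdef]
    have : ∀ u ∈ t, ((1 - β * n) * (if u = (u₀ : Ω) then 1 else 0) + β) * D u
        = (1 - β * n) * ((if u = (u₀ : Ω) then 1 else 0) * D u) + β * D u := by
      intro u _; ring
    rw [Finset.sum_congr rfl this, Finset.sum_add_distrib, ← Finset.mul_sum, ← Finset.mul_sum,
      hindsum D, hsumD, ← hm]
  have hdenpos : 0 < (1 - β * n) + c * β := by
    have : 0 ≤ c * β := mul_nonneg hc hβpos.le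
    linarith
  have hQle : condExpOn Q 𝒢 D ω ≤ m + ε := by
    rw [condExpOn, hsum, hsum, hden, hnum, div_le_iff₀ hdenpos]
    nlinarith [mul_nonneg (mul_nonneg hε.le hc) hβpos.le, mul_nonneg hβpos.le hS₀]
  exact csInf_le hSbdd (Set.mem_image_of_mem _ hQmem) |>.trans hQle


/-- For the set `P^e` of all full-support probability measures,
`inf_{Q∈P^e} E_Q[D | F_t]` equals the pointwise minimum of `D` over the atom
(partition element) containing `ω`; consequently `P^e` is consistent. -/
theorem infCE_fullSupportProbs {Ω : Type*} [Fintype Ω] [Nonempty Ω]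
    (T : ℕ) (F : ℕ → MeasurableSpace Ω) (hF : Monotone F) :
    (∀ (𝒢 : MeasurableSpace Ω) (D : Ω → ℝ) (ω : Ω),
        infCE (fullSupportProbs Ω) 𝒢 D ω = ⨅ ω' : atomOf 𝒢 ω, D (ω' : Ω)) ∧
    IsConsistent T F (fullSupportProbs Ω) := by
  refine ⟨fun 𝒢 D ω => infCE_key 𝒢 D ω, ?_⟩
  intro t ht X ω
  rw [infCE_key, infCE_key]
  have hkey : ∀ u : Ω, infCE (fullSupportProbs Ω) (F (t+1)) X u
      = ⨅ v : atomOf (F (t+1)) u, X (v : Ω) := fun u => infCE_key _ X u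
  simp only [hkey]
  set A := atomOf (F t) ω with hA
  haveI : Nonempty A := ⟨⟨ω, mem_atomOf _ ω⟩⟩
  haveI : ∀ u : Ω, Nonempty (atomOf (F (t+1)) u) := fun u => ⟨⟨u, mem_atomOf _ u⟩⟩
  have hsub : ∀ u : A, atomOf (F (t+1)) (u : Ω) ⊆ A := fun u =>
    (atomOf_anti (hF (Nat.le_succ t)) (u : Ω)).trans (atomOf_subset_of_mem _ u.2)
  refine le_antisymm (le_ciInf fun u => le_ciInf fun v =>
      ciInf_le (Finite.bddBelow_range _) (⟨(v : Ω), hsub u v.2⟩ : A)) ?_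
  refine le_ciInf fun u => ?_
  calc (⨅ u : A, ⨅ v : atomOf (F (t+1)) (u : Ω), X (v : Ω))
      ≤ ⨅ v : atomOf (F (t+1)) (u : Ω), X (v : Ω) := ciInf_le (Finite.bddBelow_range _) u
  _ ≤ X (u : Ω) := ciInf_le (Finite.bddBelow_range _) (⟨(u : Ω), mem_atomOf _ (u : Ω)⟩ : atomOf (F (t+1)) (u : Ω))
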